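/- Let h ∈ L²(ℝ) and φ(x,y,t) := χ_{[0,2]}(x)χ_{[0,1]}(y)h(t). If the system of integer translates {T_r h : r ∈ ℤ} is a Riesz sequence in L²(ℝ) with bounds A/2 and B/2, then {L_{(2k,l,m)}φ : k,l,m ∈ ℤ} is a Riesz sequence in L²(ℝ³) with bounds A and B, and conversely. -/

import Mathlib

open MeasureTheory Set
open scoped ENNReal NNReal

/-- Heisenberg group multiplication on ℝ³. -/
noncomputable def Hmul (a b : ℝ × ℝ × ℝ) : ℝ × ℝ × ℝ :=
  (a.1 + b.1, a.2.1 + b.2.1, a.2.2 + b.2.2 + (b.1 * a.2.1 - b.2.1 * a.1) / 2)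

/-- Heisenberg group inverse. -/
noncomputable def Hinv (a : ℝ × ℝ × ℝ) : ℝ × ℝ × ℝ := (-a.1, -a.2.1, -a.2.2)

/-- Left translation on the Heisenberg group. -/
noncomputable def LtrC (a : ℝ × ℝ × ℝ) (f : ℝ × ℝ × ℝ → ℂ) : ℝ × ℝ × ℝ → ℂ :=
  fun p => f (Hmul (Hinv a) p)

/-- The lattice translate L_{(2k,l,m)} g. -/
noncomputable def latTr (g : ℝ × ℝ × ℝ → ℂ) (j : ℤ × ℤ × ℤ) : ℝ × ℝ × ℝ → ℂ :=
  LtrC ((2 * j.1 : ℝ), (j.2.1 : ℝ), (j.2.2 : ℝ)) g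

/-- {L_{(2k,l,m)} g} is a Riesz sequence (with some bounds A, B > 0). -/
def IsRieszSeq (g : ℝ × ℝ × ℝ → ℂ) : Prop :=
  ∃ A B : ℝ, 0 < A ∧ 0 < B ∧
    ∀ (F : Finset (ℤ × ℤ × ℤ)) (c : ℤ × ℤ × ℤ → ℂ),
      A * ∑ j ∈ F, ‖c j‖ ^ 2 ≤
          (∫ p : ℝ × ℝ × ℝ, ‖∑ j ∈ F, c j * latTr g j p‖ ^ 2) ∧
        (∫ p : ℝ × ℝ × ℝ, ‖∑ j ∈ F, c j * latTr g j p‖ ^ 2) ≤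
          B * ∑ j ∈ F, ‖c j‖ ^ 2

/-- φ(x,y,t) = χ_{[0,2]}(x) χ_{[0,1]}(y) h(t). -/
noncomputable def phiOfh (h : ℝ → ℂ) (p : ℝ × ℝ × ℝ) : ℂ :=
  ((Set.Icc (0 : ℝ) 2).indicator (fun _ => (1 : ℝ)) p.1 : ℝ) *
    ((Set.Icc (0 : ℝ) 1).indicator (fun _ => (1 : ℝ)) p.2.1 : ℝ) * h p.2.2

noncomputable def nsq (z : ℂ) : ℝ≥0∞ := (‖z‖₊ : ℝ≥0∞) ^ 2

lemma latTr_phi_apply (g : ℝ → ℂ) (j : ℤ × ℤ × ℤ) (p : ℝ × ℝ × ℝ) :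
    latTr (phiOfh g) j p =
      (((Set.Icc (0:ℝ) 2).indicator (fun _ => (1:ℝ)) (p.1 - 2*j.1) : ℝ) : ℂ) *
      (((Set.Icc (0:ℝ) 1).indicator (fun _ => (1:ℝ)) (p.2.1 - j.2.1) : ℝ) : ℂ) *
      g (p.2.2 - j.2.2 + (2*j.1*p.2.1 - j.2.1*p.1)/2) := by
  have e1 : -(2*(j.1:ℝ)) + p.1 = p.1 - 2*j.1 := by ring
  have e2 : -((j.2.1:ℝ)) + p.2.1 = p.2.1 - j.2.1 := by ring
  have e3 : -((j.2.2:ℝ)) + p.2.2 + (p.1 * -(j.2.1:ℝ) - p.2.1 * -(2*(j.1:ℝ)))/2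
      = p.2.2 - j.2.2 + (2*j.1*p.2.1 - j.2.1*p.1)/2 := by ring
  simp only [latTr, LtrC, Hmul, Hinv, phiOfh, e1, e2, e3]

lemma ind2_eq {k₀ : ℤ} {x : ℝ} (h1 : 2*(k₀:ℝ) < x) (h2 : x < 2*k₀+2) (k : ℤ) :
    (Set.Icc (0:ℝ) 2).indicator (fun _ => (1:ℝ)) (x - 2*k) = if k = k₀ then 1 else 0 := by
  rcases eq_or_ne k k₀ with rfl | hk
  · rw [if_pos rfl, Set.indicator_of_mem]
    exact ⟨by linarith, by linarith⟩
  · rw [if_neg hk, Set.indicator_of_notMem]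
    rcases lt_or_gt_of_ne hk with hlt | hgt
    · have : (k:ℝ) + 1 ≤ k₀ := by exact_mod_cast hlt
      intro hx
      rcases hx with ⟨_, hb⟩
      linarith
    · have : (k₀:ℝ) + 1 ≤ k := by exact_mod_cast hgt
      intro hx
      rcases hx with ⟨ha, _⟩
      linarith

lemma ind1_eq {l₀ : ℤ} {y : ℝ} (h1 : (l₀:ℝ) < y) (h2 : y < l₀+1) (l : ℤ) :
    (Set.Icc (0:ℝ) 1).indicator (fun _ => (1:ℝ)) (y - l) = if l = l₀ then 1 else 0 := by
  rcases eq_or_ne l l₀ with rfl | hl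
  · rw [if_pos rfl, Set.indicator_of_mem]
    exact ⟨by linarith, by linarith⟩
  · rw [if_neg hl, Set.indicator_of_notMem]
    rcases lt_or_gt_of_ne hl with hlt | hgt
    · have : (l:ℝ) + 1 ≤ l₀ := by exact_mod_cast hlt
      intro hx
      rcases hx with ⟨_, hb⟩
      linarith
    · have : (l₀:ℝ) + 1 ≤ l := by exact_mod_cast hgt
      intro hx
      rcases hx with ⟨ha, _⟩
      linarith

lemma meas_nsq {α} [MeasurableSpace α] {f : α → ℂ} (hf : Measurable f) :
    Measurable fun x => nsq (f x) :=
  (hf.nnnorm.coe_nnreal_ennreal).pow_const 2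

lemma measurable_phiOfh {g : ℝ → ℂ} (hg : Measurable g) : Measurable (phiOfh g) := by
  have m1 : Measurable fun p : ℝ × ℝ × ℝ =>
      (((Set.Icc (0:ℝ) 2).indicator (fun _ => (1:ℝ)) p.1 : ℝ) : ℂ) :=
    Complex.measurable_ofReal.comp
      ((measurable_const.indicator measurableSet_Icc).comp measurable_fst)
  have m2 : Measurable fun p : ℝ × ℝ × ℝ =>
      (((Set.Icc (0:ℝ) 1).indicator (fun _ => (1:ℝ)) p.2.1 : ℝ) : ℂ) :=
    Complex.measurable_ofReal.comp
      ((measurable_const.indicator measurableSet_Icc).comp (measurable_fst.comp measurable_snd))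
  have m3 : Measurable fun p : ℝ × ℝ × ℝ => g p.2.2 := hg.comp (measurable_snd.comp measurable_snd)
  exact (m1.mul m2).mul m3

lemma measurable_tau (a : ℝ × ℝ × ℝ) : Measurable fun p : ℝ × ℝ × ℝ => Hmul (Hinv a) p := by
  unfold Hmul Hinv
  fun_prop

lemma measurable_latTr {f : ℝ × ℝ × ℝ → ℂ} (hf : Measurable f) (j : ℤ × ℤ × ℤ) :
    Measurable (latTr f j) :=
  hf.comp (measurable_tau _)

lemma mp_tau (a : ℝ × ℝ × ℝ) :
    MeasurePreserving (fun p : ℝ × ℝ × ℝ => Hmul (Hinv a) p) volume volume := by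
  have inner_mp : ∀ x : ℝ, MeasurePreserving
      (fun q : ℝ × ℝ => (q.1, q.2 + (x * -a.2.1 - q.1 * -a.1) / 2)) volume volume := by
    intro x
    rw [Measure.volume_eq_prod]
    exact (MeasurePreserving.id volume).skew_product
      (g := fun y t => t + (x * -a.2.1 - y * -a.1) / 2) (by fun_prop)
      (Filter.Eventually.of_forall fun y => map_add_right_eq_self volume _)
  have shear_mp : MeasurePreserving
      (fun p : ℝ × ℝ × ℝ => (p.1, (p.2.1, p.2.2 + (p.1 * -a.2.1 - p.2.1 * -a.1) / 2)))
      volume volume := by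
    rw [Measure.volume_eq_prod]
    exact (MeasurePreserving.id volume).skew_product
      (g := fun (x : ℝ) (q : ℝ × ℝ) => (q.1, q.2 + (x * -a.2.1 - q.1 * -a.1) / 2)) (by fun_prop)
      (Filter.Eventually.of_forall fun x => (inner_mp x).map_eq)
  have trans2 : MeasurePreserving
      (Prod.map (fun y : ℝ => -a.2.1 + y) (fun t : ℝ => -a.2.2 + t)) volume volume := by
    rw [Measure.volume_eq_prod]
    exact (measurePreserving_add_left volume _).prod (measurePreserving_add_left volume _)
  have trans_mp : MeasurePreserving
      (Prod.map (fun x : ℝ => -a.1 + x)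
        (Prod.map (fun y : ℝ => -a.2.1 + y) (fun t : ℝ => -a.2.2 + t))) volume volume := by
    rw [Measure.volume_eq_prod]
    exact (measurePreserving_add_left volume _).prod trans2
  have comp := trans_mp.comp shear_mp
  have : (fun p : ℝ × ℝ × ℝ => Hmul (Hinv a) p) =
      (Prod.map (fun x : ℝ => -a.1 + x)
          (Prod.map (fun y : ℝ => -a.2.1 + y) (fun t : ℝ => -a.2.2 + t))) ∘
        (fun p : ℝ × ℝ × ℝ => (p.1, (p.2.1, p.2.2 + (p.1 * -a.2.1 - p.2.1 * -a.1) / 2))) := by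
    funext p
    simp only [Hmul, Hinv, Function.comp_apply, Prod.map_apply]
    refine Prod.ext (by ring) (Prod.ext (by ring) (by ring))
  rw [this]
  exact comp

lemma lint_split (c : ℝ) (hc : 0 < c) (f : ℝ → ℝ≥0∞) :
    ∫⁻ x, f x = ∑' k : ℤ, ∫⁻ x in Set.Ioo (c*k) (c*k+c), f x := by
  have hmeas : ∀ k : ℤ, MeasurableSet (Set.Ioo (c*(k:ℝ)) (c*k+c)) := fun k => measurableSet_Ioo
  have hU : MeasurableSet (⋃ k : ℤ, Set.Ioo (c*(k:ℝ)) (c*k+c)) := MeasurableSet.iUnion hmeas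
  have hcompl : volume (⋃ k : ℤ, Set.Ioo (c*(k:ℝ)) (c*k+c))ᶜ = 0 := by
    refine measure_mono_null ?_ ((Set.countable_range fun k : ℤ => c*(k:ℝ)).measure_zero _)
    intro x hx
    simp only [Set.mem_compl_iff, Set.mem_iUnion, Set.mem_Ioo, not_exists, not_and] at hx
    set k := ⌊x / c⌋ with hk
    have h1 : c * (k:ℝ) ≤ x := by
      have := Int.floor_le (x / c)
      calc c * (k:ℝ) ≤ c * (x / c) := by
            exact mul_le_mul_of_nonneg_left this hc.le
        _ = x := by field_simp
    have h2 : x < c * k + c := by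
      have := Int.lt_floor_add_one (x / c)
      have h3 : x / c < (k:ℝ) + 1 := this
      calc x = c * (x / c) := by field_simp
        _ < c * ((k:ℝ) + 1) := by exact (mul_lt_mul_iff_right₀ hc).mpr h3
        _ = c * k + c := by ring
    have := hx k
    have hxle : x ≤ c * k := by
      by_contra hgt
      push_neg at hgt
      exact (this hgt) h2
    exact ⟨k, le_antisymm h1 hxle⟩
  have hdisj : Pairwise (Function.onFun Disjoint fun k : ℤ => Set.Ioo (c*(k:ℝ)) (c*k+c)) := by
    intro k k' hkk'
    apply Set.disjoint_left.mpr
    intro x hx hx'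
    rcases hx with ⟨h1, h2⟩
    rcases hx' with ⟨h3, h4⟩
    apply hkk'
    have e1 : (k:ℝ) < k' + 1 := by
      have : c * (k:ℝ) < c * ((k':ℝ) + 1) := by nlinarith
      exact lt_of_mul_lt_mul_left this hc.le
    have e2 : (k':ℝ) < k + 1 := by
      have : c * (k':ℝ) < c * ((k:ℝ) + 1) := by nlinarith
      exact lt_of_mul_lt_mul_left this hc.le
    have i1 : k < k' + 1 := by exact_mod_cast e1
    have i2 : k' < k + 1 := by exact_mod_cast e2
    omega
  rw [← lintegral_add_compl f hU, setLIntegral_measure_zero _ _ hcompl, add_zero,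
    lintegral_iUnion hmeas hdisj]

lemma tshift {g : ℝ → ℂ} (hg : Measurable g) (d : Finset (ℤ × ℤ × ℤ)) (a : ℤ × ℤ × ℤ → ℂ)
    (s : ℝ) :
    ∫⁻ t, nsq (∑ j ∈ d, a j * g (t - j.2.2 + s)) =
      ∫⁻ t, nsq (∑ j ∈ d, a j * g (t - j.2.2)) := by
  have mf : Measurable fun t : ℝ => nsq (∑ j ∈ d, a j * g (t - j.2.2)) := by
    apply meas_nsq
    apply Finset.measurable_sum
    intro j _
    exact (hg.comp (measurable_id.sub_const _)).const_mul _
  rw [← (measurePreserving_add_right (volume : Measure ℝ) s).lintegral_comp mf]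
  refine lintegral_congr fun t => ?_
  congr 1
  refine Finset.sum_congr rfl fun j _ => ?_
  congr 2
  ring

lemma master {g : ℝ → ℂ} (hg : Measurable g) (F : Finset (ℤ × ℤ × ℤ)) (c : ℤ × ℤ × ℤ → ℂ) :
    ∫⁻ p : ℝ × ℝ × ℝ, nsq (∑ j ∈ F, c j * latTr (phiOfh g) j p)
      = ∑ q ∈ F.image (fun j => (j.1, j.2.1)),
          2 * ∫⁻ t : ℝ, nsq (∑ j ∈ F.filter (fun j => (j.1, j.2.1) = q), c j * g (t - j.2.2)) := by
  set J : ℤ × ℤ → ℝ≥0∞ := fun q =>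
    ∫⁻ t : ℝ, nsq (∑ j ∈ F.filter (fun j => (j.1, j.2.1) = q), c j * g (t - j.2.2)) with hJ
  have mS : Measurable fun p : ℝ × ℝ × ℝ => ∑ j ∈ F, c j * latTr (phiOfh g) j p :=
    Finset.measurable_sum _ fun j _ => (measurable_latTr (measurable_phiOfh hg) j).const_mul _
  have mnS := meas_nsq mS
  have hloc : ∀ (k₀ l₀ : ℤ) (x y : ℝ), 2*(k₀:ℝ) < x → x < 2*k₀+2 → (l₀:ℝ) < y → y < l₀+1 →
      ∀ t : ℝ, (∑ j ∈ F, c j * latTr (phiOfh g) j (x, y, t)) =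
        ∑ j ∈ F.filter (fun j => (j.1, j.2.1) = (k₀, l₀)),
          c j * g (t - j.2.2 + (2*(k₀:ℝ)*y - (l₀:ℝ)*x)/2) := by
    intro k₀ l₀ x y hx1 hx2 hy1 hy2 t
    rw [Finset.sum_filter]
    refine Finset.sum_congr rfl fun j hj => ?_
    rw [latTr_phi_apply]
    dsimp only
    rw [ind2_eq hx1 hx2 j.1, ind1_eq hy1 hy2 j.2.1]
    by_cases h1 : j.1 = k₀
    · by_cases h2 : j.2.1 = l₀
      · rw [if_pos h1, if_pos h2, if_pos (by rw [h1, h2]), h1, h2]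
        push_cast
        ring
      · rw [if_pos h1, if_neg h2, if_neg (show ¬((j.1, j.2.1) = (k₀, l₀)) from fun hq => h2 (congrArg (fun z : ℤ × ℤ => z.2) hq))]
        push_cast
        ring
    · rw [if_neg h1, if_neg (show ¬((j.1, j.2.1) = (k₀, l₀)) from fun hq => h1 (congrArg Prod.fst hq))]
      push_cast
      ring
  calc ∫⁻ p : ℝ × ℝ × ℝ, nsq (∑ j ∈ F, c j * latTr (phiOfh g) j p)
      = ∫⁻ x : ℝ, ∫⁻ q : ℝ × ℝ, nsq (∑ j ∈ F, c j * latTr (phiOfh g) j (x, q)) := by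
        rw [Measure.volume_eq_prod, lintegral_prod _ mnS.aemeasurable]
    _ = ∑' k₀ : ℤ, ∫⁻ x in Set.Ioo (2*(k₀:ℝ)) (2*(k₀:ℝ)+2),
          ∫⁻ q : ℝ × ℝ, nsq (∑ j ∈ F, c j * latTr (phiOfh g) j (x, q)) := by
        rw [lint_split 2 two_pos]
    _ = ∑' k₀ : ℤ, (∑' l₀ : ℤ, J (k₀, l₀)) * volume (Set.Ioo (2*(k₀:ℝ)) (2*(k₀:ℝ)+2)) := by
        refine tsum_congr fun k₀ => ?_
        rw [← setLIntegral_const]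
        refine setLIntegral_congr_fun measurableSet_Ioo ?_
        intro x hx
        obtain ⟨hx1, hx2⟩ := hx
        have msec : Measurable fun q : ℝ × ℝ => nsq (∑ j ∈ F, c j * latTr (phiOfh g) j (x, q)) :=
          mnS.comp measurable_prodMk_left
        dsimp only
        rw [Measure.volume_eq_prod, lintegral_prod _ msec.aemeasurable, lint_split 1 one_pos]
        refine tsum_congr fun l₀ => ?_
        have hval : ∀ y ∈ Set.Ioo (1*(l₀:ℝ)) (1*(l₀:ℝ)+1),
            (∫⁻ t : ℝ, nsq (∑ j ∈ F, c j * latTr (phiOfh g) j (x, y, t))) = J (k₀, l₀) := by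
          intro y hy
          obtain ⟨hy1, hy2⟩ := hy
          have hy1' : (l₀:ℝ) < y := by linarith
          have hy2' : y < (l₀:ℝ)+1 := by linarith
          calc ∫⁻ t : ℝ, nsq (∑ j ∈ F, c j * latTr (phiOfh g) j (x, y, t))
              = ∫⁻ t : ℝ, nsq (∑ j ∈ F.filter (fun j => (j.1, j.2.1) = (k₀, l₀)),
                  c j * g (t - j.2.2 + (2*(k₀:ℝ)*y - (l₀:ℝ)*x)/2)) :=
                lintegral_congr fun t => by
                  rw [hloc k₀ l₀ x y hx1 hx2 hy1' hy2' t]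
            _ = J (k₀, l₀) := tshift hg _ _ _
        rw [setLIntegral_congr_fun measurableSet_Ioo hval,
          setLIntegral_const, Real.volume_Ioo]
        have e1 : (1*(l₀:ℝ)+1 - 1*(l₀:ℝ)) = 1 := by ring
        rw [e1, ENNReal.ofReal_one, mul_one]
    _ = ∑' k₀ : ℤ, (∑' l₀ : ℤ, J (k₀, l₀)) * 2 := by
        refine tsum_congr fun k₀ => ?_
        rw [Real.volume_Ioo]
        have e2 : (2*(k₀:ℝ)+2 - 2*(k₀:ℝ)) = 2 := by ring
        rw [e2, ENNReal.ofReal_ofNat]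
    _ = ∑' k₀ : ℤ, ∑' l₀ : ℤ, (J (k₀, l₀) * 2) := by
        refine tsum_congr fun k₀ => ?_
        exact (ENNReal.tsum_mul_right).symm
    _ = ∑' q : ℤ × ℤ, J q * 2 := (ENNReal.tsum_prod' (f := fun q : ℤ × ℤ => J q * 2)).symm
    _ = ∑ q ∈ F.image (fun j => (j.1, j.2.1)), J q * 2 := by
        apply tsum_eq_sum
        intro q hq
        have he : F.filter (fun j => (j.1, j.2.1) = q) = ∅ := by
          apply Finset.filter_eq_empty_iff.mpr
          intro j hj h
          exact hq (Finset.mem_image.mpr ⟨j, hj, h⟩)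
        rw [hJ]
        simp [he, nsq]
    _ = ∑ q ∈ F.image (fun j => (j.1, j.2.1)), 2 * J q :=
        Finset.sum_congr rfl fun q _ => mul_comm _ _

lemma ofReal_norm_sq (z : ℂ) : ENNReal.ofReal (‖z‖ ^ 2) = nsq z := by
  rw [nsq, ENNReal.ofReal_pow (norm_nonneg _), ofReal_norm, enorm_eq_nnnorm]

lemma integral_normsq_eq {α : Type*} [MeasureSpace α] {f : α → ℂ} (hf : Measurable f) :
    ∫ x, ‖f x‖ ^ 2 = (∫⁻ x, nsq (f x)).toReal := by
  rw [integral_eq_lintegral_of_nonneg_ae (Filter.Eventually.of_forall fun x => sq_nonneg _)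
    ((hf.norm.pow_const 2).aestronglyMeasurable)]
  congr 1
  exact lintegral_congr fun x => ofReal_norm_sq _

lemma sum_translates_ae {ι : Type*} {h g : ℝ → ℂ} (heq : h =ᵐ[volume] g) (F : Finset ι)
    (r : ι → ℝ) (a : ι → ℂ) :
    (fun t => ∑ i ∈ F, a i * h (t - r i)) =ᵐ[volume] fun t => ∑ i ∈ F, a i * g (t - r i) := by
  have hae : ∀ᵐ t ∂(volume : Measure ℝ), ∀ i ∈ F, h (t - r i) = g (t - r i) := by
    rw [Filter.eventually_all_finset]
    intro i _
    have h2 := ((measurePreserving_add_right (volume : Measure ℝ)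
      (-(r i))).quasiMeasurePreserving).ae_eq_comp heq
    refine h2.mono fun t ht => ?_
    simpa [Function.comp, sub_eq_add_neg] using ht
  exact hae.mono fun t ht => Finset.sum_congr rfl fun i hi => by rw [ht i hi]

lemma latTr_sum_ae {h g : ℝ → ℂ} (heq : h =ᵐ[volume] g) (F : Finset (ℤ × ℤ × ℤ))
    (c : ℤ × ℤ × ℤ → ℂ) :
    (fun p : ℝ × ℝ × ℝ => ∑ j ∈ F, c j * latTr (phiOfh h) j p) =ᵐ[volume]
      fun p => ∑ j ∈ F, c j * latTr (phiOfh g) j p := by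
  have hac : Measure.map (fun p : ℝ × ℝ × ℝ => p.2.2) volume ≪ (volume : Measure ℝ) := by
    refine Measure.AbsolutelyContinuous.mk fun s hs h0 => ?_
    rw [Measure.map_apply measurable_snd.snd hs]
    have hpre : (fun p : ℝ × ℝ × ℝ => p.2.2) ⁻¹' s = Set.univ ×ˢ (Set.univ ×ˢ s) := by
      ext p; simp
    rw [hpre, Measure.volume_eq_prod, Measure.prod_prod, Measure.volume_eq_prod,
      Measure.prod_prod, h0, mul_zero, mul_zero]
  have hphi : phiOfh h =ᵐ[volume] phiOfh g := by
    have h3 : (fun p : ℝ × ℝ × ℝ => h p.2.2) =ᵐ[volume] fun p => g p.2.2 :=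
      ae_eq_comp' measurable_snd.snd.aemeasurable heq hac
    refine h3.mono fun p hp => ?_
    simp only [phiOfh]
    simp only at hp
    rw [hp]
  have hall : ∀ᵐ p ∂(volume : Measure (ℝ × ℝ × ℝ)),
      ∀ j ∈ F, latTr (phiOfh h) j p = latTr (phiOfh g) j p := by
    rw [Filter.eventually_all_finset]
    intro j _
    have := ((mp_tau ((2 * j.1 : ℝ), (j.2.1 : ℝ), (j.2.2 : ℝ))).quasiMeasurePreserving).ae_eq_comp hphi
    exact this.mono fun p hp => hp
  exact hall.mono fun p hp => Finset.sum_congr rfl fun j hj => by rw [hp j hj]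

lemma lint_nsq_lt_top {f : ℝ → ℂ} (hf : MemLp f 2 (volume : Measure ℝ)) :
    ∫⁻ t, nsq (f t) < ∞ := by
  have h1 := hf.2
  rw [eLpNorm_eq_lintegral_rpow_enorm_toReal (by norm_num) (by norm_num)] at h1
  simp only [ENNReal.toReal_ofNat, enorm_eq_nnnorm] at h1
  have he : ∀ t, nsq (f t) = (‖f t‖₊ : ℝ≥0∞) ^ (2:ℝ) := fun t => by
    rw [nsq, ← ENNReal.rpow_natCast]
    norm_num
  have hX : (∫⁻ a, (‖f a‖₊ : ℝ≥0∞) ^ (2:ℝ)) ≠ ∞ := by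
    intro hXtop
    rw [hXtop, ENNReal.top_rpow_of_pos (by norm_num)] at h1
    exact lt_irrefl _ h1
  have : ∫⁻ t, nsq (f t) = ∫⁻ a, (‖f a‖₊ : ℝ≥0∞) ^ (2:ℝ) := lintegral_congr he
  rw [this]
  exact lt_top_iff_ne_top.mpr hX

lemma memL2_sum_translates {g : ℝ → ℂ} (hg2 : MemLp g 2 (volume : Measure ℝ))
    (d : Finset (ℤ × ℤ × ℤ)) (a : ℤ × ℤ × ℤ → ℂ) :
    MemLp (fun t => ∑ j ∈ d, a j * g (t - (j.2.2 : ℝ))) 2 (volume : Measure ℝ) := by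
  refine memLp_finsetSum _ fun j _ => ?_
  have hmp := hg2.comp_measurePreserving
    (measurePreserving_add_right (volume : Measure ℝ) (-(j.2.2 : ℝ)))
  have heqf : (fun t : ℝ => a j * g (t - (j.2.2 : ℝ)))
      = fun t => a j * (g ∘ (· + -(j.2.2 : ℝ))) t := by
    funext t
    simp [Function.comp, sub_eq_add_neg]
  rw [heqf]
  exact hmp.const_mul _

theorem riesz_iff_riesz_translates (h : ℝ → ℂ) (hh : MemLp h 2 (volume : Measure ℝ))
    (A B : ℝ) (hA : 0 < A) (hB : 0 < B) :
    -- {T_r h : r ∈ ℤ} is a Riesz sequence in L²(ℝ) with bounds A/2, B/2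
    (∀ (F : Finset ℤ) (c : ℤ → ℂ),
        A / 2 * ∑ r ∈ F, ‖c r‖ ^ 2 ≤
            (∫ t : ℝ, ‖∑ r ∈ F, c r * h (t - r)‖ ^ 2) ∧
          (∫ t : ℝ, ‖∑ r ∈ F, c r * h (t - r)‖ ^ 2) ≤
            B / 2 * ∑ r ∈ F, ‖c r‖ ^ 2) ↔
    -- iff {L_{(2k,l,m)}φ} is a Riesz sequence in L²(ℝ³) with bounds A, B
    (∀ (F : Finset (ℤ × ℤ × ℤ)) (c : ℤ × ℤ × ℤ → ℂ),
        A * ∑ j ∈ F, ‖c j‖ ^ 2 ≤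
            (∫ p : ℝ × ℝ × ℝ, ‖∑ j ∈ F, c j * latTr (phiOfh h) j p‖ ^ 2) ∧
          (∫ p : ℝ × ℝ × ℝ, ‖∑ j ∈ F, c j * latTr (phiOfh h) j p‖ ^ 2) ≤
            B * ∑ j ∈ F, ‖c j‖ ^ 2) := by
  classical
  set g : ℝ → ℂ := hh.1.mk h with hgdef
  have hgm : Measurable g := hh.1.stronglyMeasurable_mk.measurable
  have heq : h =ᵐ[volume] g := hh.1.ae_eq_mk
  have hg2 : MemLp g 2 (volume : Measure ℝ) := hh.ae_eq heq
  have bridge1 : ∀ {ι : Type} (F' : Finset ι) (rr : ι → ℝ) (a : ι → ℂ),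
      (∫ t : ℝ, ‖∑ i ∈ F', a i * h (t - rr i)‖ ^ 2)
        = (∫⁻ t : ℝ, nsq (∑ i ∈ F', a i * g (t - rr i))).toReal := by
    intro ι F' rr a
    rw [integral_congr_ae ((sum_translates_ae heq F' rr a).mono fun t ht =>
      congrArg (fun z => ‖z‖ ^ 2) ht)]
    exact integral_normsq_eq
      (Finset.measurable_sum _ fun i _ => (hgm.comp (measurable_id.sub_const _)).const_mul _)
  have e3 : ∀ (F : Finset (ℤ × ℤ × ℤ)) (c : ℤ × ℤ × ℤ → ℂ),
      (∫ p : ℝ × ℝ × ℝ, ‖∑ j ∈ F, c j * latTr (phiOfh h) j p‖ ^ 2)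
        = (∫⁻ p : ℝ × ℝ × ℝ, nsq (∑ j ∈ F, c j * latTr (phiOfh g) j p)).toReal := by
    intro F c
    rw [integral_congr_ae ((latTr_sum_ae heq F c).mono fun p hp =>
      congrArg (fun z => ‖z‖ ^ 2) hp)]
    exact integral_normsq_eq
      (Finset.measurable_sum _ fun j _ => (measurable_latTr (measurable_phiOfh hgm) j).const_mul _)
  constructor
  · intro H1 F c
    have hinj : ∀ q : ℤ × ℤ, ∀ j1 ∈ F.filter (fun j => (j.1, j.2.1) = q),
        ∀ j2 ∈ F.filter (fun j => (j.1, j.2.1) = q), j1.2.2 = j2.2.2 → j1 = j2 := by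
      intro q j1 hj1 j2 hj2 hm
      obtain ⟨-, e1⟩ := Finset.mem_filter.mp hj1
      obtain ⟨-, e2⟩ := Finset.mem_filter.mp hj2
      have a1 : j1.1 = q.1 := congrArg Prod.fst e1
      have b1 : j1.2.1 = q.2 := congrArg (fun z : ℤ × ℤ => z.2) e1
      have a2 : j2.1 = q.1 := congrArg Prod.fst e2
      have b2 : j2.2.1 = q.2 := congrArg (fun z : ℤ × ℤ => z.2) e2
      exact Prod.ext (a1.trans a2.symm) (Prod.ext (b1.trans b2.symm) hm)
    set J : ℤ × ℤ → ℝ≥0∞ := fun q =>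
      ∫⁻ t : ℝ, nsq (∑ j ∈ F.filter (fun j => (j.1, j.2.1) = q), c j * g (t - j.2.2)) with hJ
    have hJfold : ∀ q : ℤ × ℤ,
        (∫⁻ t : ℝ, nsq (∑ j ∈ F.filter (fun j => (j.1, j.2.1) = q), c j * g (t - j.2.2)))
          = J q := fun q => rfl
    have hfin : ∀ q : ℤ × ℤ, J q ≠ ∞ := fun q =>
      (lint_nsq_lt_top (memL2_sum_translates hg2 _ _)).ne
    have hbound : ∀ q : ℤ × ℤ,
        A / 2 * (∑ j ∈ F.filter (fun j => (j.1, j.2.1) = q), ‖c j‖ ^ 2) ≤ (J q).toReal ∧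
        (J q).toReal ≤ B / 2 * (∑ j ∈ F.filter (fun j => (j.1, j.2.1) = q), ‖c j‖ ^ 2) := by
      intro q
      have happ : A / 2 * (∑ r ∈ (F.filter (fun j => (j.1, j.2.1) = q)).image (fun j => j.2.2),
              ‖c (q.1, q.2, r)‖ ^ 2) ≤
            (∫ t : ℝ, ‖∑ r ∈ (F.filter (fun j => (j.1, j.2.1) = q)).image (fun j => j.2.2),
              c (q.1, q.2, r) * h (t - (r : ℝ))‖ ^ 2) ∧
          (∫ t : ℝ, ‖∑ r ∈ (F.filter (fun j => (j.1, j.2.1) = q)).image (fun j => j.2.2),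
              c (q.1, q.2, r) * h (t - (r : ℝ))‖ ^ 2) ≤
            B / 2 * (∑ r ∈ (F.filter (fun j => (j.1, j.2.1) = q)).image (fun j => j.2.2),
              ‖c (q.1, q.2, r)‖ ^ 2) :=
        H1 _ (fun m => c (q.1, q.2, m))
      have hs1 : ∀ t : ℝ,
          (∑ r ∈ (F.filter (fun j => (j.1, j.2.1) = q)).image (fun j => j.2.2),
            c (q.1, q.2, r) * h (t - (r : ℝ)))
          = ∑ j ∈ F.filter (fun j => (j.1, j.2.1) = q), c j * h (t - (j.2.2 : ℝ)) := by
        intro t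
        rw [Finset.sum_image (hinj q)]
        refine Finset.sum_congr rfl fun j hj => ?_
        obtain ⟨-, e⟩ := Finset.mem_filter.mp hj
        have hjq : (q.1, q.2, j.2.2) = j :=
          Prod.ext (congrArg Prod.fst e).symm
            (Prod.ext (congrArg (fun z : ℤ × ℤ => z.2) e).symm rfl)
        rw [hjq]
      have hs2 :
          (∑ r ∈ (F.filter (fun j => (j.1, j.2.1) = q)).image (fun j => j.2.2),
            ‖c (q.1, q.2, r)‖ ^ 2)
          = ∑ j ∈ F.filter (fun j => (j.1, j.2.1) = q), ‖c j‖ ^ 2 := by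
        rw [Finset.sum_image (hinj q)]
        refine Finset.sum_congr rfl fun j hj => ?_
        obtain ⟨-, e⟩ := Finset.mem_filter.mp hj
        have hjq : (q.1, q.2, j.2.2) = j :=
          Prod.ext (congrArg Prod.fst e).symm
            (Prod.ext (congrArg (fun z : ℤ × ℤ => z.2) e).symm rfl)
        rw [hjq]
      have hint :
          (∫ t : ℝ, ‖∑ r ∈ (F.filter (fun j => (j.1, j.2.1) = q)).image (fun j => j.2.2),
              c (q.1, q.2, r) * h (t - (r : ℝ))‖ ^ 2) = (J q).toReal := by
        have e0 : (∫ t : ℝ, ‖∑ r ∈ (F.filter (fun j => (j.1, j.2.1) = q)).image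
                (fun j => j.2.2), c (q.1, q.2, r) * h (t - (r : ℝ))‖ ^ 2)
            = ∫ t : ℝ, ‖∑ j ∈ F.filter (fun j => (j.1, j.2.1) = q),
                c j * h (t - (j.2.2 : ℝ))‖ ^ 2 :=
          integral_congr_ae (Filter.Eventually.of_forall fun t => congrArg (fun z => ‖z‖ ^ 2) (hs1 t))
        rw [e0]
        exact bridge1 _ _ _
      rw [hs2, hint] at happ
      exact happ
    have hmaster := master hgm F c
    rw [e3 F c, hmaster]
    simp only [hJfold]
    rw [ENNReal.toReal_sum (fun q hq => ENNReal.mul_ne_top (by norm_num) (hfin q))]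
    simp only [ENNReal.toReal_mul, ENNReal.toReal_ofNat]
    have hfib : ∑ j ∈ F, ‖c j‖ ^ 2 = ∑ q ∈ F.image (fun j => (j.1, j.2.1)),
        ∑ j ∈ F.filter (fun j => (j.1, j.2.1) = q), ‖c j‖ ^ 2 :=
      (Finset.sum_fiberwise_of_maps_to (fun j hj => Finset.mem_image_of_mem _ hj) _).symm
    constructor
    · rw [hfib, Finset.mul_sum]
      refine Finset.sum_le_sum fun q hq => ?_
      have hb := (hbound q).1
      linarith
    · rw [hfib, Finset.mul_sum]
      refine Finset.sum_le_sum fun q hq => ?_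
      have hb := (hbound q).2
      linarith
  · intro H3 F₁ c₁
    rcases Finset.eq_empty_or_nonempty F₁ with rfl | hne
    · simp
    · set F : Finset (ℤ × ℤ × ℤ) := F₁.image (fun m => ((0:ℤ), (0:ℤ), m)) with hF
      have hinjm : ∀ m1 ∈ F₁, ∀ m2 ∈ F₁,
          (fun m : ℤ => ((0:ℤ), (0:ℤ), m)) m1 = (fun m : ℤ => ((0:ℤ), (0:ℤ), m)) m2 →
            m1 = m2 := fun m1 _ m2 _ e => congrArg (fun z : ℤ × ℤ × ℤ => z.2.2) e
      set c : ℤ × ℤ × ℤ → ℂ := fun j => c₁ j.2.2 with hc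
      have happ := H3 F c
      have hQ : F.image (fun j => (j.1, j.2.1)) = {((0:ℤ), (0:ℤ))} := by
        rw [hF, Finset.image_image]
        exact Finset.image_const hne ((0:ℤ), (0:ℤ))
      have hfilter : F.filter (fun j => (j.1, j.2.1) = ((0:ℤ), (0:ℤ))) = F := by
        apply Finset.filter_true_of_mem
        intro j hj
        rw [hF] at hj
        obtain ⟨m, -, rfl⟩ := Finset.mem_image.mp hj
        rfl
      have hcoef : ∑ j ∈ F, ‖c j‖ ^ 2 = ∑ m ∈ F₁, ‖c₁ m‖ ^ 2 := by
        rw [hF, Finset.sum_image hinjm]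
      have hsum1 : ∀ t : ℝ,
          (∑ m ∈ F₁, c₁ m * h (t - (m : ℝ))) = ∑ j ∈ F, c j * h (t - (j.2.2 : ℝ)) := by
        intro t
        rw [hF, Finset.sum_image hinjm]
      have hmaster := master hgm F c
      rw [hQ, Finset.sum_singleton, hfilter] at hmaster
      set Jg : ℝ≥0∞ := ∫⁻ t : ℝ, nsq (∑ j ∈ F, c j * g (t - (j.2.2 : ℝ))) with hJg
      have hfin : Jg ≠ ∞ := (lint_nsq_lt_top (memL2_sum_translates hg2 _ _)).ne
      have hint1 : (∫ t : ℝ, ‖∑ r ∈ F₁, c₁ r * h (t - (r : ℝ))‖ ^ 2) = Jg.toReal := by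
        have e0 : (∫ t : ℝ, ‖∑ r ∈ F₁, c₁ r * h (t - (r : ℝ))‖ ^ 2)
            = ∫ t : ℝ, ‖∑ j ∈ F, c j * h (t - (j.2.2 : ℝ))‖ ^ 2 :=
          integral_congr_ae (Filter.Eventually.of_forall fun t => congrArg (fun z => ‖z‖ ^ 2) (hsum1 t))
        rw [e0]
        exact bridge1 _ _ _
      rw [e3 F c, hmaster, hcoef, ENNReal.toReal_mul, ENNReal.toReal_ofNat] at happ
      rw [hint1]
      constructor
      · have hb := happ.1
        linarith
      · have hb := happ.2
        linarith
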